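/- Let l ≥ 3, b, c ∈ S_l with b_l = c_l, and let b' > max(b_{l-1}, c_{l-1}). Then B_3(b_1,…,b_l; c_1,…,c_l) = B_3(b_1,…,b_{l-1}, b'; c_1,…,c_{l-1}, b'), i.e., B_3 does not depend on the common last entry as long as it exceeds max(b_{l-1}, c_{l-1}). -/

import Mathlib

open Polynomial Finset

/-- The recursively defined coefficient `A(b; c)`:  for `l = 2`, `A = 1` iff `b₂ = c₂` and
`b₁ ≤ c₁`; for `l > 2`, `A(b;c) = 0` if the last entries differ, and otherwise it is the sum
of `A` on the truncations over all strictly increasing `(l-1)`-tuples `c'` of positive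
integers with `c' ≤ (c₁, …, c_{l-1})` componentwise. -/
def Acoef : (l : ℕ) → (Fin l → ℕ) → (Fin l → ℕ) → ℕ
  | 0, _, _ => 0
  | 1, _, _ => 0
  | 2, b, c => if b 1 = c 1 ∧ b 0 ≤ c 0 then 1 else 0
  | l + 3, b, c =>
    if b (Fin.last (l + 2)) = c (Fin.last (l + 2)) then
      ∑ c' ∈ (Finset.Icc (fun _ => 1) (fun j : Fin (l + 2) => c j.castSucc)).filter
          (fun c' => ∀ i j : Fin (l + 2), i < j → c' i < c' j),
        Acoef (l + 2) (fun j => b j.castSucc) c'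
    else 0

/-- `B₃(b;c) = ∑_{d₁=b₁}^{b₂-1} ⋯ ∑_{d_{l-1}=b_{l-1}}^{b_l-1}
A(d₁,…,d_{l-1}; c₁,…,c_{l-1}) (1-t)^{∑_{i=1}^{l-1}(cᵢ-dᵢ)}`, for `l = m + 3`. -/
noncomputable def B3fn (m : ℕ) (b c : Fin (m + 3) → ℕ) : Polynomial ℚ :=
  ∑ d ∈ Finset.Icc (fun j : Fin (m + 2) => b j.castSucc)
      (fun j : Fin (m + 2) => b j.succ - 1),
    (Acoef (m + 2) d (fun j => c j.castSucc) : Polynomial ℚ) *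
      (1 - X) ^ (∑ j, (c j.castSucc - d j))

lemma Acoef_last_ne {l : ℕ} (d e : Fin (l + 2) → ℕ)
    (h : d (Fin.last (l + 1)) ≠ e (Fin.last (l + 1))) : Acoef (l + 2) d e = 0 := by
  cases l with
  | zero =>
    simp only [Acoef]
    rw [if_neg]
    rintro ⟨h1, _⟩
    exact h h1
  | succ k =>
    simp only [Acoef]
    rw [if_neg h]

lemma sum_upper_trunc (n : ℕ) (lo up e : Fin (n + 2) → ℕ)
    (h : e (Fin.last (n + 1)) ≤ up (Fin.last (n + 1))) :
    ∑ d ∈ Finset.Icc lo up, (Acoef (n + 2) d e : Polynomial ℚ) * (1 - X) ^ (∑ j, (e j - d j)) =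
    ∑ d ∈ Finset.Icc lo (Function.update up (Fin.last (n + 1)) (e (Fin.last (n + 1)))),
      (Acoef (n + 2) d e : Polynomial ℚ) * (1 - X) ^ (∑ j, (e j - d j)) := by
  apply (Finset.sum_subset ?_ ?_).symm
  · apply Finset.Icc_subset_Icc_right
    intro j
    rcases eq_or_ne j (Fin.last (n + 1)) with rfl | hj
    · simpa using h
    · simp [Function.update_of_ne hj]
  · intro d hd hd'
    rw [Finset.mem_Icc] at hd hd'
    have hdl : d (Fin.last (n + 1)) ≠ e (Fin.last (n + 1)) := by
      intro heq
      apply hd'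
      refine ⟨hd.1, fun j => ?_⟩
      rcases eq_or_ne j (Fin.last (n + 1)) with rfl | hj
      · simp [heq]
      · simpa [Function.update_of_ne hj] using hd.2 j
    rw [Acoef_last_ne d e hdl]
    simp

theorem B3_last_entry_invariant' (m : ℕ) (b c : Fin (m + 3) → ℕ)
    (hb : StrictMono b) (hc : StrictMono c) (hb1 : ∀ i, 1 ≤ b i) (hc1 : ∀ i, 1 ≤ c i)
    (hlast : b (Fin.last (m + 2)) = c (Fin.last (m + 2)))
    (b' : ℕ) (hb' : max (b ⟨m + 1, Nat.add_lt_add_left (Nat.one_lt_succ_succ 1) m⟩)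
      (c ⟨m + 1, Nat.add_lt_add_left (Nat.one_lt_succ_succ 1) m⟩) < b') :
    (∑ d ∈ Finset.Icc (fun j : Fin (m + 2) => b j.castSucc)
      (fun j : Fin (m + 2) => b j.succ - 1),
    (Acoef (m + 2) d (fun j => c j.castSucc) : Polynomial ℚ) *
      (1 - X) ^ (∑ j, (c j.castSucc - d j))) =
    (∑ d ∈ Finset.Icc (fun j : Fin (m + 2) => Function.update b (Fin.last (m + 2)) b' j.castSucc)
      (fun j : Fin (m + 2) => Function.update b (Fin.last (m + 2)) b' j.succ - 1),
    (Acoef (m + 2) d (fun j => Function.update c (Fin.last (m + 2)) b' j.castSucc) : Polynomial ℚ) *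
      (1 - X) ^ (∑ j, (Function.update c (Fin.last (m + 2)) b' j.castSucc - d j))) := by
  have hcs : ∀ j : Fin (m + 2), j.castSucc ≠ Fin.last (m + 2) :=
    fun j => (Fin.castSucc_lt_last j).ne
  have hclo : (fun j : Fin (m + 2) => Function.update c (Fin.last (m + 2)) b' j.castSucc)
      = fun j => c j.castSucc := funext fun j => Function.update_of_ne (hcs j) _ _
  have hblo : (fun j : Fin (m + 2) => Function.update b (Fin.last (m + 2)) b' j.castSucc)
      = fun j => b j.castSucc := funext fun j => Function.update_of_ne (hcs j) _ _
  have hbup : (fun j : Fin (m + 2) => Function.update b (Fin.last (m + 2)) b' j.succ - 1)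
      = Function.update (fun j : Fin (m + 2) => b j.succ - 1) (Fin.last (m + 1)) (b' - 1) := by
    funext j
    rcases eq_or_ne j (Fin.last (m + 1)) with rfl | hj
    · rw [Function.update_self, Fin.succ_last, Function.update_self]
    · rw [Function.update_of_ne hj, Function.update_of_ne]
      exact fun hjl => hj (Fin.succ_injective _ hjl)
  simp only [show ∀ j : Fin (m + 2),
      Function.update c (Fin.last (m + 2)) b' j.castSucc = c j.castSucc from
      fun j => Function.update_of_ne (hcs j) _ _,
    show ∀ j : Fin (m + 2),
      Function.update b (Fin.last (m + 2)) b' j.castSucc = b j.castSucc from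
      fun j => Function.update_of_ne (hcs j) _ _]
  rw [hbup]
  set e : Fin (m + 2) → ℕ := fun j => c j.castSucc with he
  have hel : e (Fin.last (m + 1)) = c ⟨m + 1, by omega⟩ := rfl
  have hbb : b ((Fin.last (m + 1)).succ) = c (Fin.last (m + 2)) := by
    rw [Fin.succ_last]; exact hlast
  have h1 : e (Fin.last (m + 1)) ≤ (fun j : Fin (m + 2) => b j.succ - 1) (Fin.last (m + 1)) := by
    have := hc (show (⟨m + 1, by omega⟩ : Fin (m + 3)) < Fin.last (m + 2) by
      simp [Fin.lt_def, Fin.last])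
    rw [hel]
    simp only []
    omega
  have h2 : e (Fin.last (m + 1)) ≤
      Function.update (fun j : Fin (m + 2) => b j.succ - 1) (Fin.last (m + 1)) (b' - 1)
        (Fin.last (m + 1)) := by
    rw [Function.update_self, hel]
    omega
  rw [sum_upper_trunc m _ _ e h1, sum_upper_trunc m _ _ e h2, Function.update_idem]

/-- Remark 3.2(ii): `B₃` does not depend on the common last entry of `b` and `c`, as long
as it exceeds `max(b_{l-1}, c_{l-1})` (here `l = m + 3`). -/
theorem B3_last_entry_invariant (m : ℕ) (b c : Fin (m + 3) → ℕ)
    (hb : StrictMono b) (hc : StrictMono c) (hb1 : ∀ i, 1 ≤ b i) (hc1 : ∀ i, 1 ≤ c i)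
    (hlast : b (Fin.last (m + 2)) = c (Fin.last (m + 2)))
    (b' : ℕ) (hb' : max (b ⟨m + 1, by omega⟩) (c ⟨m + 1, by omega⟩) < b') :
    B3fn m b c =
      B3fn m (Function.update b (Fin.last (m + 2)) b')
        (Function.update c (Fin.last (m + 2)) b') := by
  unfold B3fn
  exact B3_last_entry_invariant' m b c hb hc hb1 hc1 hlast b' hb'
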